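/- The function u_T^*(t,r) = (c1(T-t)^2 - c2 r^2)/(r^2 + c3(T-t)^2)^2 with d=7, c1 = 4/25*((3*7-8)*d0 + 8*49 - 56*7 + 48), c2 = 4/5*d0, c3 = 1/15*(3*7 - 18 + d0), d0 = sqrt(6*6*1) = 6, i.e. U(ρ) = 24(21 - 5ρ^2)/(3 + 5ρ^2)^2 and u_T^*(t,r) = (T-t)^{-2} U(r/(T-t)), satisfies the radial quadratic wave equation ∂_t^2 u - ∂_r^2 u - (6/r) ∂_r u = u^2 for all (t,r) with (t,r) ≠ (T,0) and r > 0. -/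

import Mathlib

private noncomputable def G (A B C E x : ℝ) : ℝ := (A * x ^ 2 + B) / (C * x ^ 2 + E) ^ 2

private noncomputable def G1 (A B C E x : ℝ) : ℝ :=
  (-2 * A * C * x ^ 3 + (2 * A * E - 4 * B * C) * x) / (C * x ^ 2 + E) ^ 3

private noncomputable def G2 (A B C E x : ℝ) : ℝ :=
  (6 * A * C ^ 2 * x ^ 4 + (20 * B * C ^ 2 - 16 * A * C * E) * x ^ 2
    + 2 * A * E ^ 2 - 4 * B * C * E) / (C * x ^ 2 + E) ^ 4

private lemma hasDerivAt_G (A B C E x : ℝ) (h : C * x ^ 2 + E ≠ 0) :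
    HasDerivAt (G A B C E) (G1 A B C E x) x := by
  have h1 : HasDerivAt (fun x : ℝ => A * x ^ 2 + B) (A * (2 * x)) x := by
    simpa using (((hasDerivAt_pow 2 x).const_mul A).add_const B)
  have h2 : HasDerivAt (fun x : ℝ => C * x ^ 2 + E) (C * (2 * x)) x := by
    simpa using (((hasDerivAt_pow 2 x).const_mul C).add_const E)
  have h3 := h2.pow 2
  have h4 := h1.div h3 (pow_ne_zero 2 h)
  refine h4.congr_deriv ?_
  unfold G1
  simp only [Pi.pow_apply, show (2:ℕ) - 1 = 1 from rfl, pow_one, Nat.cast_ofNat]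
  field_simp
  ring

private lemma hasDerivAt_G1 (A B C E x : ℝ) (h : C * x ^ 2 + E ≠ 0) :
    HasDerivAt (G1 A B C E) (G2 A B C E x) x := by
  have h1 : HasDerivAt (fun x : ℝ => -2 * A * C * x ^ 3 + (2 * A * E - 4 * B * C) * x)
      (-2 * A * C * (3 * x ^ 2) + (2 * A * E - 4 * B * C)) x := by
    have := ((hasDerivAt_pow 3 x).const_mul (-2 * A * C)).add
      ((hasDerivAt_id x).const_mul (2 * A * E - 4 * B * C))
    refine this.congr_deriv ?_
    ring
  have h2 : HasDerivAt (fun x : ℝ => C * x ^ 2 + E) (C * (2 * x)) x := by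
    simpa using (((hasDerivAt_pow 2 x).const_mul C).add_const E)
  have h3 := h2.pow 3
  have h4 := h1.div h3 (pow_ne_zero 3 h)
  refine h4.congr_deriv ?_
  unfold G2
  simp only [Pi.pow_apply]
  field_simp
  ring

/-- The explicit self-similar solution `u_T^*` of the radial quadratic wave equation
in dimension `d = 7` solves `∂_t² u - ∂_r² u - (6/r) ∂_r u = u²` away from `(T,0)`. -/
theorem uTstar_solves_quadratic_wave (T : ℝ) (hT : 0 < T) (u : ℝ → ℝ → ℝ)
    (hu : ∀ t r : ℝ, u t r = 24 * (21 * (T - t) ^ 2 - 5 * r ^ 2) /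
      (3 * (T - t) ^ 2 + 5 * r ^ 2) ^ 2) :
    ∀ t r : ℝ, 0 < r → (t, r) ≠ (T, 0) →
      deriv (deriv (fun t' => u t' r)) t - deriv (deriv (fun r' => u t r')) r
        - (6 / r) * deriv (fun r' => u t r') r = (u t r) ^ 2 := by
  intro t r hr _
  have hr0 : r ≠ 0 := ne_of_gt hr
  have hr2 : (0:ℝ) < r ^ 2 := by positivity
  -- t-direction: f t' = G 504 (-120 r²) 3 (5 r²) (t' - T)
  have hdt : ∀ x : ℝ, (3 : ℝ) * x ^ 2 + 5 * r ^ 2 ≠ 0 := by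
    intro x; positivity
  have hft : (fun t' => u t' r) = fun t' => G 504 (-120 * r ^ 2) 3 (5 * r ^ 2) (t' - T) := by
    funext t'
    rw [hu]
    unfold G
    have h1 : (t' - T) ^ 2 = (T - t') ^ 2 := by ring
    rw [h1]
    congr 1 <;> ring
  have hf1 : deriv (fun t' => u t' r) =
      fun t' => G1 504 (-120 * r ^ 2) 3 (5 * r ^ 2) (t' - T) := by
    funext t'
    rw [hft]
    have := (hasDerivAt_G 504 (-120 * r ^ 2) 3 (5 * r ^ 2) (t' - T) (hdt _)).comp t'
      ((hasDerivAt_id t').sub_const T)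
    simpa [Function.comp_def] using this.deriv
  have hf2 : deriv (deriv (fun t' => u t' r)) t =
      G2 504 (-120 * r ^ 2) 3 (5 * r ^ 2) (t - T) := by
    rw [hf1]
    have := (hasDerivAt_G1 504 (-120 * r ^ 2) 3 (5 * r ^ 2) (t - T) (hdt _)).comp t
      ((hasDerivAt_id t).sub_const T)
    simpa [Function.comp_def] using this.deriv
  -- r-direction: g r' = G (-120) (504 (T-t)²) 5 (3 (T-t)²) r'
  set s : ℝ := T - t with hs
  have hgr : ∀ r' : ℝ, r' ≠ 0 → u t r' = G (-120) (504 * s ^ 2) 5 (3 * s ^ 2) r' := by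
    intro r' _
    rw [hu]
    unfold G
    congr 1 <;> ring
  have hdr : ∀ r' : ℝ, r' ≠ 0 → (5 : ℝ) * r' ^ 2 + 3 * s ^ 2 ≠ 0 := by
    intro r' hr'
    have : (0:ℝ) < 5 * r' ^ 2 + 3 * s ^ 2 := by positivity
    exact ne_of_gt this
  have hnbhd : ∀ᶠ r' in nhds r, r' ≠ 0 := by
    exact eventually_ne_nhds hr0
  have hg1 : deriv (fun r' => u t r') =ᶠ[nhds r]
      fun r' => G1 (-120) (504 * s ^ 2) 5 (3 * s ^ 2) r' := by
    filter_upwards [hnbhd] with r' hr'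
    have hequ : (fun r'' => u t r'') =ᶠ[nhds r'] G (-120) (504 * s ^ 2) 5 (3 * s ^ 2) := by
      filter_upwards [eventually_ne_nhds hr'] with y hy
      exact hgr y hy
    rw [Filter.EventuallyEq.deriv_eq hequ]
    exact (hasDerivAt_G (-120) (504 * s ^ 2) 5 (3 * s ^ 2) r' (hdr r' hr')).deriv
  have hg2 : deriv (deriv (fun r' => u t r')) r =
      G2 (-120) (504 * s ^ 2) 5 (3 * s ^ 2) r := by
    rw [Filter.EventuallyEq.deriv_eq hg1]
    exact (hasDerivAt_G1 (-120) (504 * s ^ 2) 5 (3 * s ^ 2) r (hdr r hr0)).deriv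
  have hg1' : deriv (fun r' => u t r') r = G1 (-120) (504 * s ^ 2) 5 (3 * s ^ 2) r :=
    hg1.self_of_nhds
  rw [hf2, hg2, hg1', hu]
  unfold G1 G2
  have hd1 : (3 : ℝ) * (t - T) ^ 2 + 5 * r ^ 2 ≠ 0 := hdt (t - T)
  have hd2 : (5 : ℝ) * r ^ 2 + 3 * s ^ 2 ≠ 0 := hdr r hr0
  have hd3 : (3 : ℝ) * s ^ 2 + 5 * r ^ 2 ≠ 0 := by
    have : (0:ℝ) < 3 * s ^ 2 + 5 * r ^ 2 := by positivity
    exact ne_of_gt this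
  have hts : (t - T) ^ 2 = s ^ 2 := by rw [hs]; ring
  rw [hts, hs]
  field_simp
  ring
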